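/- (Two time-point IPTW = G-computation, restricted history s=1 at t=1) In the two time-point study, under consistency, SRA, and positivity, consider the history-restricted counterfactual Y_{a(1)} := Y_{A(0),a(1)} where A(0) is left random. Then E[Y_{a(1)}] = E[ 1{A(1)=a(1)} Y / P(A(1)=a(1) | A(0), L(0), L(1)) ] = Σ_{a(0),l(0),l(1)} E[Y | A(0)=a(0), A(1)=a(1), L̄(1)=(l(0),l(1))] · P(A(0)=a(0), L(0)=l(0), L(1)=l(1)). In particular the HRMSM parameter E[Y_{a(1)}] depends on the treatment mechanism at time 0 (it is a parameter of (F_X, g), not of F_X alone). -/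

import Mathlib

open Finset
open scoped Classical

noncomputable section

def pr {Ω : Type} [Fintype Ω] (μ : Ω → ℝ) (E : Ω → Prop) : ℝ :=
  ∑ ω, if E ω then μ ω else 0

def cpr {Ω : Type} [Fintype Ω] (μ : Ω → ℝ) (E F : Ω → Prop) : ℝ :=
  pr μ (fun ω => E ω ∧ F ω) / pr μ F

def ex {Ω : Type} [Fintype Ω] (μ : Ω → ℝ) (f : Ω → ℝ) : ℝ :=
  ∑ ω, f ω * μ ω

def cex {Ω : Type} [Fintype Ω] (μ : Ω → ℝ) (f : Ω → ℝ) (F : Ω → Prop) : ℝ :=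
  (∑ ω, if F ω then f ω * μ ω else 0) / pr μ F

def exif {Ω : Type} [Fintype Ω] (μ : Ω → ℝ) (f : Ω → ℝ) (E : Ω → Prop) : ℝ :=
  ∑ ω, if E ω then f ω * μ ω else 0

lemma cex_eq_exif_div {Ω : Type} [Fintype Ω] (μ : Ω → ℝ) (f : Ω → ℝ) (F : Ω → Prop) :
    cex μ f F = exif μ f F / pr μ F := rfl

lemma pr_congr {Ω : Type} [Fintype Ω] (μ : Ω → ℝ) {E F : Ω → Prop}
    (h : ∀ ω, E ω ↔ F ω) : pr μ E = pr μ F := by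
  unfold pr
  exact Finset.sum_congr rfl fun ω _ => if_congr (h ω) rfl rfl

lemma exif_congr {Ω : Type} [Fintype Ω] (μ : Ω → ℝ) {f g : Ω → ℝ} {E F : Ω → Prop}
    (hEF : ∀ ω, E ω ↔ F ω) (hfg : ∀ ω, F ω → f ω = g ω) :
    exif μ f E = exif μ g F := by
  unfold exif
  refine Finset.sum_congr rfl fun ω _ => ?_
  by_cases hω : F ω
  · rw [if_pos ((hEF ω).mpr hω), if_pos hω, hfg ω hω]
  · rw [if_neg (fun h => hω ((hEF ω).mp h)), if_neg hω]

lemma exif_div {Ω : Type} [Fintype Ω] (μ : Ω → ℝ) (f : Ω → ℝ) (E : Ω → Prop) (c : ℝ) :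
    exif μ (fun ω => f ω / c) E = exif μ f E / c := by
  unfold exif
  rw [Finset.sum_div]
  refine Finset.sum_congr rfl fun ω _ => ?_
  by_cases hω : E ω
  · rw [if_pos hω, if_pos hω, div_mul_eq_mul_div]
  · rw [if_neg hω, if_neg hω, zero_div]

lemma exif_eq_zero {Ω : Type} [Fintype Ω] {μ : Ω → ℝ} (f : Ω → ℝ) {E : Ω → Prop}
    (h : ∀ ω, E ω → μ ω = 0) : exif μ f E = 0 := by
  unfold exif
  refine Finset.sum_eq_zero fun ω _ => ?_
  by_cases hω : E ω
  · rw [if_pos hω, h ω hω, mul_zero]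
  · rw [if_neg hω]

lemma mu_zero_of_pr_zero {Ω : Type} [Fintype Ω] {μ : Ω → ℝ} (hμ : ∀ ω, 0 ≤ μ ω)
    {S : Ω → Prop} (h : pr μ S = 0) : ∀ ω, S ω → μ ω = 0 := by
  intro ω hω
  have h0 : ∀ x ∈ Finset.univ, (0:ℝ) ≤ if S x then μ x else 0 := by
    intro x _; split <;> simp [hμ x]
  have := (Finset.sum_eq_zero_iff_of_nonneg h0).mp h ω (mem_univ ω)
  simpa [hω] using this

lemma pr_nonneg {Ω : Type} [Fintype Ω] {μ : Ω → ℝ} (hμ : ∀ ω, 0 ≤ μ ω) (E : Ω → Prop) :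
    0 ≤ pr μ E := by
  refine Finset.sum_nonneg fun ω _ => ?_
  split <;> simp [hμ ω]

lemma fiber_sum {Ω β : Type} [Fintype Ω] (μ : Ω → ℝ) (k : Ω → β) (P : Ω → Prop)
    (h : β → ℝ) (f : Ω → ℝ) (hf : ∀ ω, P ω → f ω = h (k ω)) :
    exif μ f P = ∑ v ∈ Finset.univ.image k, h v * pr μ (fun ω => P ω ∧ k ω = v) := by
  unfold exif pr
  simp only [Finset.mul_sum, mul_ite, mul_zero]
  rw [Finset.sum_comm]
  refine Finset.sum_congr rfl fun ω _ => ?_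
  by_cases hP : P ω
  · rw [if_pos hP, hf ω hP,
      Finset.sum_eq_single_of_mem (k ω) (Finset.mem_image_of_mem k (mem_univ ω))
        (fun v _ hv => if_neg (fun hc => hv (hc.2.symm))), if_pos ⟨hP, rfl⟩]
  · rw [if_neg hP]
    exact (Finset.sum_eq_zero fun v _ => if_neg (fun hc => hP hc.1)).symm

lemma sum_strata {Ω 𝒜₀ ℒ₀ ℒ₁ : Type} [Fintype Ω] [Fintype 𝒜₀] [Fintype ℒ₀] [Fintype ℒ₁]
    (μ : Ω → ℝ) (A0 : Ω → 𝒜₀) (L0 : Ω → ℒ₀) (L1 : Ω → ℒ₁) (F : Ω → ℝ) :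
    ex μ F = ∑ a0, ∑ l0, ∑ l1,
      exif μ F (fun ω => A0 ω = a0 ∧ L0 ω = l0 ∧ L1 ω = l1) := by
  unfold ex exif
  beta_reduce
  have key : ∀ ω, F ω * μ ω = ∑ a0, ∑ l0, ∑ l1,
      (if A0 ω = a0 ∧ L0 ω = l0 ∧ L1 ω = l1 then F ω * μ ω else 0) := by
    intro ω
    simp [ite_and]
  rw [Finset.sum_congr rfl fun ω _ => key ω]
  rw [Finset.sum_comm]
  refine Finset.sum_congr rfl fun a0 _ => ?_
  rw [Finset.sum_comm]
  refine Finset.sum_congr rfl fun l0 _ => ?_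
  rw [Finset.sum_comm]
  refine Finset.sum_congr rfl fun l1 _ => Finset.sum_congr rfl fun ω _ => ?_
  congr

lemma exif_ind {Ω : Type} [Fintype Ω] (μ : Ω → ℝ) (g : Ω → ℝ) (E Q : Ω → Prop) :
    exif μ (fun ω => (if Q ω then (1 : ℝ) else 0) * g ω) E
      = exif μ g (fun ω => E ω ∧ Q ω) := by
  unfold exif
  refine Finset.sum_congr rfl fun ω _ => ?_
  by_cases hE : E ω <;> by_cases hQ : Q ω <;> simp [hE, hQ]

/-- two time-point study, history-restricted counterfactual
`Y_{a1} = Y_{A(0),a1}` with `A(0)` left random (s = 1 at t = 1): its mean equals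
the IPTW expression and the restricted G-computation formula; in particular it
is a parameter of `(F_X, g)`, depending on the time-0 treatment mechanism. -/
theorem two_timepoint_restricted_iptw_gcomp
    {Ω 𝒜₀ 𝒜₁ ℒ₀ ℒ₁ : Type} [Fintype Ω] [Fintype 𝒜₀] [Fintype 𝒜₁] [Fintype ℒ₀] [Fintype ℒ₁]
    (μ : Ω → ℝ) (hμ : ∀ ω, 0 ≤ μ ω) (hsum : ∑ ω, μ ω = 1)
    (L0 : Ω → ℒ₀) (A0 : Ω → 𝒜₀) (L1 : Ω → ℒ₁) (A1 : Ω → 𝒜₁)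
    (CL1 : 𝒜₀ → Ω → ℒ₁) (CY : 𝒜₀ → 𝒜₁ → Ω → ℝ) (Y : Ω → ℝ)
    (hconsL : ∀ ω, L1 ω = CL1 (A0 ω) ω)
    (hconsY : ∀ ω, Y ω = CY (A0 ω) (A1 ω) ω)
    (SRA1 : ∀ (a1 : 𝒜₁) (c : 𝒜₀ → ℒ₁) (y : 𝒜₀ → 𝒜₁ → ℝ) (a0 : 𝒜₀) (l0 : ℒ₀) (l1 : ℒ₁),
      pr μ (fun ω => A0 ω = a0 ∧ L0 ω = l0 ∧ L1 ω = l1) > 0 →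
      cpr μ (fun ω => A1 ω = a1 ∧ ((∀ a, CL1 a ω = c a) ∧ ∀ a a', CY a a' ω = y a a'))
        (fun ω => A0 ω = a0 ∧ L0 ω = l0 ∧ L1 ω = l1) =
      cpr μ (fun ω => A1 ω = a1) (fun ω => A0 ω = a0 ∧ L0 ω = l0 ∧ L1 ω = l1) *
      cpr μ (fun ω => (∀ a, CL1 a ω = c a) ∧ ∀ a a', CY a a' ω = y a a')
        (fun ω => A0 ω = a0 ∧ L0 ω = l0 ∧ L1 ω = l1))
    (POS1 : ∀ (a1 : 𝒜₁) (a0 : 𝒜₀) (l0 : ℒ₀) (l1 : ℒ₁),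
      pr μ (fun ω => A0 ω = a0 ∧ L0 ω = l0 ∧ L1 ω = l1) > 0 →
      cpr μ (fun ω => A1 ω = a1) (fun ω => A0 ω = a0 ∧ L0 ω = l0 ∧ L1 ω = l1) > 0)
    (a1 : 𝒜₁) :
    ex μ (fun ω => CY (A0 ω) a1 ω) =
      ex μ (fun ω => (if A1 ω = a1 then (1 : ℝ) else 0) * Y ω /
        cpr μ (fun ω' => A1 ω' = a1)
          (fun ω' => A0 ω' = A0 ω ∧ L0 ω' = L0 ω ∧ L1 ω' = L1 ω)) ∧
    ex μ (fun ω => CY (A0 ω) a1 ω) =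
      ∑ a0 : 𝒜₀, ∑ l0 : ℒ₀, ∑ l1 : ℒ₁,
        cex μ Y (fun ω => A0 ω = a0 ∧ A1 ω = a1 ∧ L0 ω = l0 ∧ L1 ω = l1) *
        pr μ (fun ω => A0 ω = a0 ∧ L0 ω = l0 ∧ L1 ω = l1) := by
  classical
  set k : Ω → (𝒜₀ → ℒ₁) × (𝒜₀ → 𝒜₁ → ℝ) :=
    fun ω => (fun a => CL1 a ω, fun a a' => CY a a' ω) with hk
  have hkiff : ∀ (ω : Ω) (v : (𝒜₀ → ℒ₁) × (𝒜₀ → 𝒜₁ → ℝ)),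
      k ω = v ↔ ((∀ a, CL1 a ω = v.1 a) ∧ ∀ a a', CY a a' ω = v.2 a a') := by
    intro ω v
    constructor
    · rintro rfl; exact ⟨fun a => rfl, fun a a' => rfl⟩
    · rintro ⟨h1, h2⟩
      have e1 : (fun a => CL1 a ω) = v.1 := funext h1
      have e2 : (fun a a' => CY a a' ω) = v.2 := funext fun a => funext fun a' => h2 a a'
      simp [hk, Prod.ext_iff, e1, e2]
  -- key independence step per positive stratum
  have key : ∀ (a0 : 𝒜₀) (l0 : ℒ₀) (l1 : ℒ₁),
      pr μ (fun ω => A0 ω = a0 ∧ L0 ω = l0 ∧ L1 ω = l1) > 0 →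
      exif μ (fun ω => CY a0 a1 ω)
          (fun ω => (A0 ω = a0 ∧ L0 ω = l0 ∧ L1 ω = l1) ∧ A1 ω = a1)
        = cpr μ (fun ω => A1 ω = a1) (fun ω => A0 ω = a0 ∧ L0 ω = l0 ∧ L1 ω = l1) *
          exif μ (fun ω => CY a0 a1 ω) (fun ω => A0 ω = a0 ∧ L0 ω = l0 ∧ L1 ω = l1) := by
    intro a0 l0 l1 hS
    have hSne : pr μ (fun ω => A0 ω = a0 ∧ L0 ω = l0 ∧ L1 ω = l1) ≠ 0 := ne_of_gt hS
    have hP : ∀ v : (𝒜₀ → ℒ₁) × (𝒜₀ → 𝒜₁ → ℝ),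
        pr μ (fun ω => ((A0 ω = a0 ∧ L0 ω = l0 ∧ L1 ω = l1) ∧ A1 ω = a1) ∧ k ω = v)
          = cpr μ (fun ω => A1 ω = a1) (fun ω => A0 ω = a0 ∧ L0 ω = l0 ∧ L1 ω = l1) *
            pr μ (fun ω => (A0 ω = a0 ∧ L0 ω = l0 ∧ L1 ω = l1) ∧ k ω = v) := by
      intro v
      have hs := SRA1 a1 v.1 v.2 a0 l0 l1 hS
      have e1 : pr μ (fun ω => (A1 ω = a1 ∧ ((∀ a, CL1 a ω = v.1 a) ∧
            ∀ a a', CY a a' ω = v.2 a a')) ∧ (A0 ω = a0 ∧ L0 ω = l0 ∧ L1 ω = l1))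
          = pr μ (fun ω => ((A0 ω = a0 ∧ L0 ω = l0 ∧ L1 ω = l1) ∧ A1 ω = a1) ∧ k ω = v) :=
        pr_congr μ (fun ω => by have := hkiff ω v; tauto)
      have e2 : pr μ (fun ω => ((∀ a, CL1 a ω = v.1 a) ∧
            ∀ a a', CY a a' ω = v.2 a a') ∧ (A0 ω = a0 ∧ L0 ω = l0 ∧ L1 ω = l1))
          = pr μ (fun ω => (A0 ω = a0 ∧ L0 ω = l0 ∧ L1 ω = l1) ∧ k ω = v) :=
        pr_congr μ (fun ω => by have := hkiff ω v; tauto)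
      unfold cpr at hs ⊢
      rw [e1, e2] at hs
      rw [div_eq_iff hSne] at hs
      rw [hs]
      field_simp
    have L := fiber_sum μ k
      (fun ω => (A0 ω = a0 ∧ L0 ω = l0 ∧ L1 ω = l1) ∧ A1 ω = a1)
      (fun v => v.2 a0 a1) (fun ω => CY a0 a1 ω) (fun ω _ => rfl)
    have R := fiber_sum μ k
      (fun ω => A0 ω = a0 ∧ L0 ω = l0 ∧ L1 ω = l1)
      (fun v => v.2 a0 a1) (fun ω => CY a0 a1 ω) (fun ω _ => rfl)
    rw [L, R, Finset.mul_sum]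
    refine Finset.sum_congr rfl fun v _ => ?_
    rw [hP v]
    ring
  have lhs_eq : ex μ (fun ω => CY (A0 ω) a1 ω)
      = ∑ a0, ∑ l0, ∑ l1, exif μ (fun ω => CY a0 a1 ω)
          (fun ω => A0 ω = a0 ∧ L0 ω = l0 ∧ L1 ω = l1) := by
    rw [sum_strata μ A0 L0 L1]
    exact Finset.sum_congr rfl fun a0 _ => Finset.sum_congr rfl fun l0 _ =>
      Finset.sum_congr rfl fun l1 _ =>
        exif_congr μ (fun ω => Iff.rfl) (fun ω hω => by rw [hω.1])
  constructor
  · -- IPTW identity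
    rw [lhs_eq, sum_strata μ A0 L0 L1]
    refine Finset.sum_congr rfl fun a0 _ => Finset.sum_congr rfl fun l0 _ =>
      Finset.sum_congr rfl fun l1 _ => ?_
    rcases (pr_nonneg hμ (fun ω => A0 ω = a0 ∧ L0 ω = l0 ∧ L1 ω = l1)).eq_or_lt
      with hz | hpos
    · rw [exif_eq_zero _ (mu_zero_of_pr_zero hμ hz.symm),
        exif_eq_zero _ (mu_zero_of_pr_zero hμ hz.symm)]
    · have hGpos := POS1 a1 a0 l0 l1 hpos
      set G := cpr μ (fun ω => A1 ω = a1) (fun ω => A0 ω = a0 ∧ L0 ω = l0 ∧ L1 ω = l1)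
        with hGdef
      have e1 : exif μ (fun ω => (if A1 ω = a1 then (1 : ℝ) else 0) * Y ω /
            cpr μ (fun ω' => A1 ω' = a1)
              (fun ω' => A0 ω' = A0 ω ∧ L0 ω' = L0 ω ∧ L1 ω' = L1 ω))
            (fun ω => A0 ω = a0 ∧ L0 ω = l0 ∧ L1 ω = l1)
          = exif μ (fun ω => (if A1 ω = a1 then (1 : ℝ) else 0) * (CY a0 a1 ω / G))
            (fun ω => A0 ω = a0 ∧ L0 ω = l0 ∧ L1 ω = l1) := by
        refine exif_congr μ (fun ω => Iff.rfl) (fun ω hω => ?_)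
        obtain ⟨h1, h2, h3⟩ := hω
        rw [hconsY ω, h1, h2, h3, ← hGdef]
        by_cases hA : A1 ω = a1
        · rw [hA, if_pos rfl]
          ring
        · rw [if_neg hA]
          ring
      rw [e1, exif_ind, exif_div]
      beta_reduce
      rw [key a0 l0 l1 hpos, ← hGdef, mul_comm, mul_div_assoc,
        div_self (ne_of_gt hGpos), mul_one]
  · -- G-computation identity
    rw [lhs_eq]
    refine Finset.sum_congr rfl fun a0 _ => Finset.sum_congr rfl fun l0 _ =>
      Finset.sum_congr rfl fun l1 _ => ?_
    rcases (pr_nonneg hμ (fun ω => A0 ω = a0 ∧ L0 ω = l0 ∧ L1 ω = l1)).eq_or_lt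
      with hz | hpos
    · rw [← hz, mul_zero, exif_eq_zero _ (mu_zero_of_pr_zero hμ hz.symm)]
    · have hGpos := POS1 a1 a0 l0 l1 hpos
      set G := cpr μ (fun ω => A1 ω = a1) (fun ω => A0 ω = a0 ∧ L0 ω = l0 ∧ L1 ω = l1)
        with hGdef
      have hN : exif μ Y (fun ω => A0 ω = a0 ∧ A1 ω = a1 ∧ L0 ω = l0 ∧ L1 ω = l1)
          = G * exif μ (fun ω => CY a0 a1 ω)
              (fun ω => A0 ω = a0 ∧ L0 ω = l0 ∧ L1 ω = l1) := by
        rw [← key a0 l0 l1 hpos]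
        refine exif_congr μ (fun ω => by tauto) (fun ω hω => ?_)
        obtain ⟨⟨h1, h2, h3⟩, hA⟩ := hω
        rw [hconsY ω, h1, hA]
      have hD : pr μ (fun ω => A0 ω = a0 ∧ A1 ω = a1 ∧ L0 ω = l0 ∧ L1 ω = l1)
          = G * pr μ (fun ω => A0 ω = a0 ∧ L0 ω = l0 ∧ L1 ω = l1) := by
        rw [pr_congr μ (show ∀ ω, (A0 ω = a0 ∧ A1 ω = a1 ∧ L0 ω = l0 ∧ L1 ω = l1)
            ↔ (A1 ω = a1 ∧ (A0 ω = a0 ∧ L0 ω = l0 ∧ L1 ω = l1)) from fun ω => by tauto)]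
        rw [hGdef]
        unfold cpr
        rw [div_mul_cancel₀ _ (ne_of_gt hpos)]
      rw [cex_eq_exif_div, hN, hD]
      have hg : G ≠ 0 := ne_of_gt hGpos
      have hp : pr μ (fun ω => A0 ω = a0 ∧ L0 ω = l0 ∧ L1 ω = l1) ≠ 0 := ne_of_gt hpos
      field_simp
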